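/- Suppose 0 < |μ| < 1, k > 0, η ≠ 0 and |μ(1 + kη/2)| < 1. Then there exists N such that for every n ≥ N and every connected finite simple undirected graph G on n vertices, writing λ₁ for the largest eigenvalue of the Laplacian of G and |E| for its number of edges, one has |μ| · max(1, |1 + kηλ₁/(2|E|)|) < 1; consequently the Jacobian J = μ((kη/(2|E|))·L + I) of the mean-field dynamics at the equal wealth state has spectral radius strictly less than 1, so J^t v → 0 for every v ∈ ℝ^n. -/

import Mathlib

open Filter Topology Matrix

lemma aux_abs_le {μ a t T : ℝ} (ht0 : 0 ≤ t) (htT : t ≤ T) :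
    |μ * (1 + a * t)| ≤ max |μ| |μ * (1 + a * T)| := by
  rcases le_or_gt 0 (μ * a) with h | h
  · exact abs_le_max_abs_abs (by nlinarith) (by nlinarith)
  · rw [max_comm]
    exact abs_le_max_abs_abs (by nlinarith) (by nlinarith)

lemma aux_eig_nonneg {n : ℕ} (G : SimpleGraph (Fin n)) [DecidableRel G.Adj]
    {b : ℝ} {v : Fin n → ℝ} (hv : v ≠ 0)
    (h : (G.lapMatrix ℝ).mulVec v = b • v) : 0 ≤ b := by
  have hps := (SimpleGraph.posSemidef_lapMatrix ℝ G).dotProduct_mulVec_nonneg v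
  rw [h] at hps
  have hvv : 0 < dotProduct v v := by
    rcases lt_or_eq_of_le (by simpa using dotProduct_self_star_nonneg v : (0:ℝ) ≤ dotProduct v v) with h' | h'
    · exact h'
    · exact absurd ((dotProduct_self_eq_zero).mp h'.symm) hv
  simp only [star_trivial, dotProduct_smul, smul_eq_mul] at hps
  nlinarith

lemma aux_eig_le {n : ℕ} (G : SimpleGraph (Fin n)) [DecidableRel G.Adj]
    {b : ℝ} {v : Fin n → ℝ} (hv : v ≠ 0)
    (h : (G.lapMatrix ℝ).mulVec v = b • v) : b ≤ n := by
  have hdv : dotProduct v v = ∑ i, v i ^ 2 := by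
    simp [dotProduct, sq]
  have key : Matrix.toLinearMap₂' ℝ (G.lapMatrix ℝ) v v = b * ∑ i, v i ^ 2 := by
    rw [Matrix.toLinearMap₂'_apply', h, dotProduct_smul, smul_eq_mul, hdv]
  rw [SimpleGraph.lapMatrix_toLinearMap₂'] at key
  have h1 : (∑ i : Fin n, ∑ j : Fin n, if G.Adj i j then (v i - v j)^2 else 0)
      ≤ ∑ i : Fin n, ∑ j : Fin n, (v i - v j)^2 := by
    refine Finset.sum_le_sum fun i _ => Finset.sum_le_sum fun j _ => ?_
    split
    · exact le_rfl
    · positivity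
  have h2 : (∑ i : Fin n, ∑ j : Fin n, (v i - v j)^2)
      = 2*n*(∑ i, v i^2) - 2*(∑ i, v i)^2 := by
    have hrow : ∀ i : Fin n, (∑ j : Fin n, (v i - v j)^2)
        = n * v i^2 - 2 * v i * (∑ j, v j) + ∑ j, v j^2 := by
      intro i
      have : ∀ j : Fin n, (v i - v j)^2 = v i^2 - 2 * v i * v j + v j^2 := by
        intro j; ring
      simp only [this, Finset.sum_add_distrib, Finset.sum_sub_distrib,
        Finset.sum_const, Finset.card_univ, Fintype.card_fin, nsmul_eq_mul,
        ← Finset.mul_sum]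
    simp only [hrow, Finset.sum_add_distrib, Finset.sum_sub_distrib,
      Finset.sum_const, Finset.card_univ, Fintype.card_fin, nsmul_eq_mul,
      ← Finset.mul_sum, Finset.sum_mul]
    have : ∑ x : Fin n, 2 * v x * (∑ j, v j) = (∑ x : Fin n, v x) * (2 * ∑ j : Fin n, v j) := by
      rw [Finset.sum_mul]
      exact Finset.sum_congr rfl fun x _ => by ring
    rw [this]
    ring
  have hQpos : 0 < ∑ i, v i ^ 2 := by
    rw [← hdv]
    rcases lt_or_eq_of_le (by simpa using dotProduct_self_star_nonneg v :
        (0:ℝ) ≤ dotProduct v v) with h' | h'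
    · exact h'
    · exact absurd ((dotProduct_self_eq_zero).mp h'.symm) hv
  nlinarith [sq_nonneg (∑ i, v i)]

lemma aux_card_edges {n : ℕ} (hn : 0 < n) (G : SimpleGraph (Fin n)) [DecidableRel G.Adj]
    (hc : G.Connected) : n - 1 ≤ G.edgeFinset.card := by
  classical
  set root : Fin n := ⟨0, hn⟩ with hroot
  have hex : ∀ v : Fin n, v ≠ root → ∃ u, G.Adj v u ∧ G.dist u root < G.dist v root := by
    intro v hv
    obtain ⟨p, hp⟩ := hc.exists_walk_length_eq_dist v root
    have hd : 0 < G.dist v root := hc.pos_dist_of_ne hv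
    cases p with
    | nil => simp at hp; omega
    | @cons _ u _ h q =>
      refine ⟨u, h, ?_⟩
      have h1 : G.dist u root ≤ q.length := SimpleGraph.dist_le q
      simp only [SimpleGraph.Walk.length_cons] at hp
      omega
  choose f hadj hlt using hex
  set F : Fin n → Sym2 (Fin n) :=
    fun v => if h : v = root then Sym2.diag root else s(v, f v h) with hF
  have hcard : (Finset.univ.erase root).card ≤ G.edgeFinset.card := by
    apply Finset.card_le_card_of_injOn F
    · intro v hv
      have hv' : v ≠ root := (Finset.mem_erase.mp hv).1
      rw [hF]
      simp only [dif_neg hv']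
      rw [Finset.mem_coe, SimpleGraph.mem_edgeFinset, SimpleGraph.mem_edgeSet]
      exact hadj v hv'
    · intro a ha b hb hab
      have ha' : a ≠ root := (Finset.mem_erase.mp ha).1
      have hb' : b ≠ root := (Finset.mem_erase.mp hb).1
      rw [hF] at hab
      simp only [dif_neg ha', dif_neg hb', Sym2.eq_iff] at hab
      rcases hab with ⟨h1, _⟩ | ⟨h1, h2⟩
      · exact h1
      · exfalso
        have l1 := hlt a ha'
        have l2 := hlt b hb'
        rw [← h1] at l2
        rw [h2] at l1
        omega
  rwa [Finset.card_erase_of_mem (Finset.mem_univ root), Finset.card_univ,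
    Fintype.card_fin] at hcard

lemma aux_tendsto {n : ℕ} {J : Matrix (Fin n) (Fin n) ℝ} (hJ : J.IsHermitian)
    (h : ∀ i, |hJ.eigenvalues i| < 1) (v : Fin n → ℝ) :
    Tendsto (fun t : ℕ => (J ^ t).mulVec v) atTop (𝓝 0) := by
  classical
  set U : Matrix (Fin n) (Fin n) ℝ := (hJ.eigenvectorUnitary : Matrix (Fin n) (Fin n) ℝ) with hU
  have hUU : U * star U = 1 := Matrix.mem_unitaryGroup_iff.mp hJ.eigenvectorUnitary.2
  have hUU' : star U * U = 1 := Matrix.mem_unitaryGroup_iff'.mp hJ.eigenvectorUnitary.2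
  have hspec : J = U * Matrix.diagonal hJ.eigenvalues * star U := by
    have := hJ.spectral_theorem
    simpa [RCLike.ofReal_real_eq_id] using this
  have hpow : ∀ t : ℕ, J ^ t = U * Matrix.diagonal (fun i => hJ.eigenvalues i ^ t) * star U := by
    intro t
    induction t with
    | zero => simp [pow_zero, Matrix.diagonal_one, hUU]
    | succ t ih =>
      rw [pow_succ, ih]
      calc U * Matrix.diagonal (fun i => hJ.eigenvalues i ^ t) * star U * J
          = U * Matrix.diagonal (fun i => hJ.eigenvalues i ^ t) * star U *
            (U * Matrix.diagonal hJ.eigenvalues * star U) := by rw [← hspec]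
        _
          = U * (Matrix.diagonal (fun i => hJ.eigenvalues i ^ t) * (star U * U) *
              Matrix.diagonal hJ.eigenvalues) * star U := by
            simp only [Matrix.mul_assoc]
        _ = U * Matrix.diagonal (fun i => hJ.eigenvalues i ^ (t+1)) * star U := by
            rw [hUU', Matrix.mul_one, Matrix.diagonal_mul_diagonal]
            have he : (fun i => hJ.eigenvalues i ^ t * hJ.eigenvalues i)
                = fun i => hJ.eigenvalues i ^ (t + 1) := funext fun i => by ring
            rw [he]
  have hg : Continuous (fun d : Fin n → ℝ => (U * Matrix.diagonal d * star U).mulVec v) := by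
    exact ((continuous_const.matrix_mul continuous_id.matrix_diagonal).matrix_mul
      continuous_const).matrix_mulVec continuous_const
  have hlim : Tendsto (fun t : ℕ => fun i => hJ.eigenvalues i ^ t) atTop (𝓝 0) := by
    rw [tendsto_pi_nhds]
    intro i
    simpa using tendsto_pow_atTop_nhds_zero_of_abs_lt_one (h i)
  have hcomp := (hg.tendsto 0).comp hlim
  have h0 : (U * Matrix.diagonal (0 : Fin n → ℝ) * star U).mulVec v = 0 := by
    have hz : Matrix.diagonal (0 : Fin n → ℝ) = 0 := Matrix.diagonal_zero
    rw [hz, Matrix.mul_zero, Matrix.zero_mul, Matrix.zero_mulVec]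
  rw [h0] at hcomp
  apply hcomp.congr
  intro t
  exact (congrArg (fun M : Matrix (Fin n) (Fin n) ℝ => M.mulVec v) (hpow t)).symm

/-- stable half of the phase transition: if `0 < |μ| < 1`,
`k > 0`, `η ≠ 0` and `|μ (1 + kη/2)| < 1`, then for all large enough `n` and
every connected graph on `n` vertices we have
`|μ| * max 1 |1 + kηλ₁/(2|E|)| < 1`, and the iterates of the Jacobian
`J = μ ((kη/(2|E|)) L + I)` converge to `0` on every vector. -/
theorem equal_wealth_stable_all_graphs (η μ k : ℝ)
    (hμ0 : 0 < |μ|) (hμ1 : |μ| < 1) (hk : 0 < k) (hη : η ≠ 0)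
    (hcrit : |μ * (1 + k * η / 2)| < 1) :
    ∃ N : ℕ, ∀ n : ℕ, N ≤ n →
      ∀ (G : SimpleGraph (Fin n)) [DecidableRel G.Adj], G.Connected →
        ∀ lam1 : ℝ,
          IsGreatest {b : ℝ | ∃ v : Fin n → ℝ, v ≠ 0 ∧
            (G.lapMatrix ℝ).mulVec v = b • v} lam1 →
          |μ| * max 1 |1 + k * η * lam1 / (2 * (G.edgeFinset.card : ℝ))| < 1 ∧
            ∀ v : Fin n → ℝ,
              Tendsto
                (fun t : ℕ =>
                  ((μ • ((k * η / (2 * (G.edgeFinset.card : ℝ))) • G.lapMatrix ℝ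
                    + (1 : Matrix (Fin n) (Fin n) ℝ))) ^ t).mulVec v)
                atTop (𝓝 0) := by
  classical
  set c := |μ * (1 + k * η / 2)| with hc
  set B := |μ * k * η| with hB
  obtain ⟨m, hm⟩ := exists_nat_gt (B / (1 - c))
  refine ⟨m + 2, fun n hn G _ hconn lam1 hlam => ?_⟩
  have hμne : μ ≠ 0 := abs_pos.mp hμ0
  have hn2 : 2 ≤ n := le_trans (by omega) hn
  have hnm : m + 1 ≤ n - 1 := by omega
  have hE : n - 1 ≤ G.edgeFinset.card := aux_card_edges (by omega) G hconn
  set e : ℝ := (G.edgeFinset.card : ℝ) with he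
  have he1 : (n : ℝ) - 1 ≤ e := by
    have h1 : ((n - 1 : ℕ) : ℝ) ≤ e := Nat.cast_le.mpr hE
    rwa [Nat.cast_sub (by omega), Nat.cast_one] at h1
  have hn1R : (1 : ℝ) ≤ (n : ℝ) - 1 := by
    have : (2 : ℝ) ≤ (n : ℝ) := by exact_mod_cast hn2
    linarith
  have hnm1R : (m : ℝ) + 1 ≤ (n : ℝ) - 1 := by
    have h1 : ((m + 1 : ℕ) : ℝ) ≤ ((n - 1 : ℕ) : ℝ) := Nat.cast_le.mpr hnm
    rw [Nat.cast_add, Nat.cast_one, Nat.cast_sub (by omega), Nat.cast_one] at h1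
    exact h1
  have hepos : (0 : ℝ) < e := by linarith
  obtain ⟨w0, hw00, hw0eq⟩ := hlam.1
  have hl0 : 0 ≤ lam1 := aux_eig_nonneg G hw00 hw0eq
  have hln : lam1 ≤ (n : ℝ) := aux_eig_le G hw00 hw0eq
  have hc0 : 0 ≤ c := abs_nonneg _
  have hc1 : c < 1 := hcrit
  have hBnn : 0 ≤ B := abs_nonneg _
  -- endpoint bound
  have hBn : B < (1 - c) * ((n : ℝ) - 1) := by
    have h1 : B / (1 - c) < (n : ℝ) - 1 := by linarith
    have h2 : B < ((n : ℝ) - 1) * (1 - c) := (div_lt_iff₀ (by linarith)).mp h1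
    nlinarith [h2]
  set X : ℝ := (n : ℝ) / (2 * ((n : ℝ) - 1)) with hX
  have hXhalf : X - 1/2 = 1 / (2 * ((n : ℝ) - 1)) := by
    rw [hX]; field_simp; ring
  have hend : |μ * (1 + k * η * X)| < 1 := by
    have hdecomp : μ * (1 + k * η * X) = μ * (1 + k * η / 2) + μ * k * η * (X - 1/2) := by ring
    have habs : |μ * (1 + k * η * X)| ≤ c + B * (X - 1/2) := by
      rw [hdecomp, hc, hB]
      calc |μ * (1 + k * η / 2) + μ * k * η * (X - 1/2)|
          ≤ |μ * (1 + k * η / 2)| + |μ * k * η * (X - 1/2)| := abs_add_le _ _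
        _ ≤ |μ * (1 + k * η / 2)| + |μ * k * η| * (X - 1/2) := by
            have hXnn : |X - 1/2| = X - 1/2 := abs_of_nonneg (by rw [hXhalf]; positivity)
            rw [abs_mul (μ * k * η) (X - 1/2), hXnn]
    have hfin : B * (X - 1/2) < 1 - c := by
      rw [hXhalf]
      rw [mul_one_div]
      rw [div_lt_iff₀ (by linarith : (0:ℝ) < 2 * ((n:ℝ) - 1))]
      nlinarith
    linarith
  -- key eigenvalue bound
  have hkey : ∀ lam : ℝ, 0 ≤ lam → lam ≤ lam1 →
      |μ * (1 + k * η * lam / (2 * e))| < 1 := by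
    intro lam h0 h1
    have hx0 : 0 ≤ lam / (2 * e) := by positivity
    have hxX : lam / (2 * e) ≤ X := by
      rw [hX]
      exact div_le_div₀ (Nat.cast_nonneg n) (le_trans h1 hln) (by linarith) (by linarith)
    have hb := aux_abs_le (μ := μ) (a := k * η) hx0 hxX
    have hrw : μ * (1 + k * η * lam / (2 * e)) = μ * (1 + k * η * (lam / (2 * e))) := by
      ring
    rw [hrw]
    calc |μ * (1 + k * η * (lam / (2 * e)))| ≤ max |μ| |μ * (1 + k * η * X)| := hb
      _ < 1 := max_lt hμ1 hend
  have hpart1 : |μ| * max 1 |1 + k * η * lam1 / (2 * e)| < 1 := by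
    rw [mul_max_of_nonneg _ _ (abs_nonneg μ), mul_one, ← abs_mul]
    exact max_lt hμ1 (hkey lam1 hl0 le_rfl)
  refine ⟨hpart1, fun v => ?_⟩
  -- the Jacobian
  set s : ℝ := k * η / (2 * e) with hs
  have hsne : s ≠ 0 := by
    rw [hs]
    apply div_ne_zero (mul_ne_zero (ne_of_gt hk) hη) (by positivity)
  have hL : (G.lapMatrix ℝ).IsHermitian := (SimpleGraph.posSemidef_lapMatrix ℝ G).1
  set J : Matrix (Fin n) (Fin n) ℝ :=
    μ • (s • G.lapMatrix ℝ + (1 : Matrix (Fin n) (Fin n) ℝ)) with hJdef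
  have hJ : J.IsHermitian := by
    show J.conjTranspose = J
    rw [hJdef, Matrix.conjTranspose_smul, Matrix.conjTranspose_add,
      Matrix.conjTranspose_smul, Matrix.conjTranspose_one, hL.eq]
    simp
  have heig : ∀ i, |hJ.eigenvalues i| < 1 := by
    intro i
    set w : Fin n → ℝ := ⇑(hJ.eigenvectorBasis i) with hw
    have hweq : J *ᵥ w = hJ.eigenvalues i • w := hJ.mulVec_eigenvectorBasis i
    have hwne : w ≠ 0 := by
      intro h0
      have h1 : ‖hJ.eigenvectorBasis i‖ = 1 := hJ.eigenvectorBasis.orthonormal.1 i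
      have h2 : (hJ.eigenvectorBasis i : EuclideanSpace ℝ (Fin n)) = 0 := by
        apply PiLp.ext
        intro j
        exact congrFun h0 j
      rw [h2, norm_zero] at h1
      exact zero_ne_one h1
    set d : ℝ := hJ.eigenvalues i with hd
    -- L w = lam • w
    have hexp : (μ * s) • ((G.lapMatrix ℝ) *ᵥ w) + μ • w = d • w := by
      have : J *ᵥ w = (μ * s) • ((G.lapMatrix ℝ) *ᵥ w) + μ • w := by
        rw [hJdef, Matrix.smul_mulVec, Matrix.add_mulVec,
          Matrix.smul_mulVec, Matrix.one_mulVec, smul_add, smul_smul]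
      rw [← this, hweq]
    have hLw : (G.lapMatrix ℝ).mulVec w = ((d - μ) / (μ * s)) • w := by
      have hms : μ * s ≠ 0 := mul_ne_zero hμne hsne
      have h1 : (μ * s) • ((G.lapMatrix ℝ) *ᵥ w) = (d - μ) • w := by
        have := hexp
        rw [sub_smul]
        linear_combination (norm := module) this
      calc (G.lapMatrix ℝ) *ᵥ w = (μ * s)⁻¹ • ((μ * s) • ((G.lapMatrix ℝ) *ᵥ w)) := by
            rw [inv_smul_smul₀ hms]
        _ = (μ * s)⁻¹ • ((d - μ) • w) := by rw [h1]
        _ = ((d - μ) / (μ * s)) • w := by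
            rw [smul_smul, div_eq_inv_mul]
    set lam : ℝ := (d - μ) / (μ * s) with hlamdef
    have hmem : lam ∈ {b : ℝ | ∃ v : Fin n → ℝ, v ≠ 0 ∧
        (G.lapMatrix ℝ).mulVec v = b • v} := ⟨w, hwne, hLw⟩
    have hle : lam ≤ lam1 := hlam.2 hmem
    have h0 : 0 ≤ lam := aux_eig_nonneg G hwne hLw
    have hdval : d = μ * (1 + k * η * lam / (2 * e)) := by
      have hms : μ * s ≠ 0 := mul_ne_zero hμne hsne
      have h1 : lam * (μ * s) = d - μ := div_mul_cancel₀ _ hms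
      have h2 : k * η * lam / (2 * e) = s * lam := by
        rw [hs, div_mul_eq_mul_div]
      rw [h2]
      linear_combination (-1 : ℝ) * h1
    rw [hdval]
    exact hkey lam h0 hle
  exact aux_tendsto hJ heig v
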